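/- arXiv:2106.11661 — 5 statements merged into one kernel-verified Lean document; each statement's English description precedes it below -/
import Mathlib

section
/- Let d ≥ 2 be an integer and α, β ∈ ℂ with |α| = 1. If α^{d^n(d+1)} → β as n → ∞, then β^{d-1} = 1. -/
/-- If |α| = 1 and α^{d^n(d+1)} → β, then β^{d-1} = 1. -/
theorem stmt1 (d : ℕ) (hd : 2 ≤ d) (α β : ℂ) (hα : ‖α‖ = 1)
    (h : Filter.Tendsto (fun n : ℕ => α ^ (d ^ n * (d + 1))) Filter.atTop (nhds β)) :
    β ^ (d - 1) = 1 := by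
  have habs : ‖β‖ = 1 := by
    have h1 : Filter.Tendsto (fun n : ℕ => ‖α ^ (d ^ n * (d + 1))‖)
        Filter.atTop (nhds ‖β‖) := (continuous_norm.tendsto β).comp h
    have h2 : (fun n : ℕ => ‖α ^ (d ^ n * (d + 1))‖) = fun _ => (1 : ℝ) := by
      funext n; rw [norm_pow, hα, one_pow]
    rw [h2] at h1
    exact (tendsto_nhds_unique tendsto_const_nhds h1).symm
  have hβ0 : β ≠ 0 := by
    intro h0; rw [h0] at habs; simp at habs
  have hshift : Filter.Tendsto (fun n : ℕ => α ^ (d ^ (n + 1) * (d + 1)))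
      Filter.atTop (nhds β) := h.comp (Filter.tendsto_add_atTop_nat 1)
  have hpow : Filter.Tendsto (fun n : ℕ => (α ^ (d ^ n * (d + 1))) ^ d)
      Filter.atTop (nhds (β ^ d)) := h.pow d
  have heq : (fun n : ℕ => (α ^ (d ^ n * (d + 1))) ^ d) =
      fun n : ℕ => α ^ (d ^ (n + 1) * (d + 1)) := by
    funext n
    rw [← pow_mul]
    ring_nf
  rw [heq] at hpow
  have hβd : β ^ d = β := tendsto_nhds_unique hpow hshift
  have hd' : d - 1 + 1 = d := by omega
  have : β ^ (d - 1) * β = 1 * β := by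
    rw [one_mul, ← pow_succ, hd', hβd]
  exact mul_right_cancel₀ hβ0 this
end

section
/- Let H(x,y) = (y, p_H(y) − δ_H x) and F(x,y) = (y, p_F(y) − δ_F x) be Hénon maps with p_H, p_F monic centered polynomials of degree d ≥ 2 over ℂ and δ_H, δ_F ≠ 0. Suppose α, β, γ ∈ ℂ satisfy α^{d+1} = β, β^{d-1} = 1, γ^{d-1} = 1, α·p_F(αy) = β·p_H(y) for all y, and δ_F = γ·δ_H. Define B(x,y) = (γαβ^{-1}x, α^{-1}y) and L(x,y) = (γ^{-1}β x, β y). Then F = L ∘ B ∘ H ∘ B as maps ℂ² → ℂ². -/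
/-- If α p_F(αy) = β p_H(y) and δ_F = γ δ_H with the root-of-unity relations,
    then F = L ∘ B ∘ H ∘ B. -/
theorem stmt7 (d : ℕ) (hd : 2 ≤ d) (aH aF : ℕ → ℂ) (δH δF α β γ : ℂ)
    (hδH : δH ≠ 0) (hδF : δF ≠ 0)
    (pH pF : ℂ → ℂ)
    (hpH : ∀ y : ℂ, pH y = y ^ d + ∑ k ∈ Finset.Icc 2 d, aH (d - k) * y ^ (d - k))
    (hpF : ∀ y : ℂ, pF y = y ^ d + ∑ k ∈ Finset.Icc 2 d, aF (d - k) * y ^ (d - k))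
    (hαβ : α ^ (d + 1) = β) (hβ1 : β ^ (d - 1) = 1) (hγ1 : γ ^ (d - 1) = 1)
    (hp : ∀ y : ℂ, α * pF (α * y) = β * pH y) (hδ : δF = γ * δH)
    (H F B L : ℂ × ℂ → ℂ × ℂ)
    (hH : ∀ p : ℂ × ℂ, H p = (p.2, pH p.2 - δH * p.1))
    (hF : ∀ p : ℂ × ℂ, F p = (p.2, pF p.2 - δF * p.1))
    (hB : ∀ p : ℂ × ℂ, B p = (γ * α * β⁻¹ * p.1, α⁻¹ * p.2))
    (hL : ∀ p : ℂ × ℂ, L p = (γ⁻¹ * β * p.1, β * p.2)) :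
    F = L ∘ B ∘ H ∘ B := by
  have hβ0 : β ≠ 0 := by
    intro h
    rw [h, zero_pow (by omega : d - 1 ≠ 0)] at hβ1
    exact one_ne_zero hβ1.symm
  have hγ0 : γ ≠ 0 := by
    intro h
    rw [h, zero_pow (by omega : d - 1 ≠ 0)] at hγ1
    exact one_ne_zero hγ1.symm
  have hα0 : α ≠ 0 := by
    intro h
    rw [h, zero_pow (by omega : d + 1 ≠ 0)] at hαβ
    exact hβ0 hαβ.symm
  funext p
  obtain ⟨x, y⟩ := p
  have key : β * pH (α⁻¹ * y) = α * pF y := by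
    have := hp (α⁻¹ * y)
    rw [mul_inv_cancel_left₀ hα0] at this
    exact this.symm
  simp only [Function.comp_apply, hB, hH, hL, hF, hδ]
  refine Prod.ext ?_ ?_
  · field_simp
  · simp only
    field_simp
    have key2 : β * pH (y / α) = α * pF y := by rw [div_eq_inv_mul]; exact key
    linear_combination -key2
end

section
/- Let d ≥ 2, δ ≠ 0, and Q a complex polynomial of degree d+1. For n ≥ 0 and k ≥ 1 define γ_{k/d^n}(z, ζ) = (z + (d/δ)·Σ_{l=0}^{n-1} (d/δ)^l (Q(ζ^{d^l}) − Q((e^{2πik/d^n}ζ)^{d^l})), e^{2πik/d^n}ζ). Then γ_{k/d^n} is a well-defined biholomorphic self-map of ℂ × (ℂ∖D̄) with γ_{k/d^n} ∘ γ_{k'/d^{n'}} = γ_{(k/d^n + k'/d^{n'})}, i.e., these maps form a group isomorphic to Z[1/d]/ℤ. -/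
noncomputable def st13E (d k n : ℕ) : ℂ :=
  Complex.exp (2 * Real.pi * Complex.I * k / (d : ℂ) ^ n)

noncomputable def st13S (d : ℕ) (δ : ℂ) (Q : Polynomial ℂ) (n : ℕ) (ζ : ℂ) : ℂ :=
  ∑ l ∈ Finset.range n, ((d : ℂ) / δ) ^ l * Q.eval (ζ ^ d ^ l)

lemma st13E_abs (d k n : ℕ) : ‖st13E d k n‖ = 1 := by
  have h : (2 * Real.pi * Complex.I * k / (d : ℂ) ^ n)
      = ((2 * Real.pi * k / (d : ℝ) ^ n : ℝ) : ℂ) * Complex.I := by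
    push_cast; ring
  rw [st13E, h, Complex.norm_exp_ofReal_mul_I]

lemma st13E_pow (d k n : ℕ) (hd : (d : ℂ) ≠ 0) : st13E d k n ^ d ^ n = 1 := by
  rw [st13E, ← Complex.exp_nat_mul, Nat.cast_pow]
  have h : (d : ℂ) ^ n * (2 * Real.pi * Complex.I * k / (d : ℂ) ^ n)
      = ((k : ℤ) : ℂ) * (2 * Real.pi * Complex.I) := by
    have : ((d : ℂ) ^ n) ≠ 0 := pow_ne_zero _ hd
    field_simp
    simp
  rw [h, Complex.exp_int_mul_two_pi_mul_I]

lemma st13E_mul (d k n k' n' : ℕ) (hd : (d : ℂ) ≠ 0) :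
    st13E d k n * st13E d k' n' = st13E d (k * d ^ n' + k' * d ^ n) (n + n') := by
  rw [st13E, st13E, st13E, ← Complex.exp_add]
  congr 1
  have h1 : ((d : ℂ) ^ n) ≠ 0 := pow_ne_zero _ hd
  have h2 : ((d : ℂ) ^ n') ≠ 0 := pow_ne_zero _ hd
  push_cast [pow_add]
  field_simp

lemma st13E_one (d k n : ℕ) (hd : (d : ℂ) ≠ 0) : st13E d (k * d ^ n) n = 1 := by
  rw [st13E]
  have h : (2 * Real.pi * Complex.I * (k * d ^ n : ℕ) / (d : ℂ) ^ n)
      = ((k : ℤ) : ℂ) * (2 * Real.pi * Complex.I) := by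
    have : ((d : ℂ) ^ n) ≠ 0 := pow_ne_zero _ hd
    push_cast
    field_simp
  rw [h, Complex.exp_int_mul_two_pi_mul_I]

lemma st13E_period (d k n : ℕ) (hd : (d : ℂ) ≠ 0) :
    st13E d (k + d ^ n) n = st13E d k n := by
  rw [st13E, st13E]
  have h : (2 * Real.pi * Complex.I * ((k + d ^ n : ℕ) : ℂ) / (d : ℂ) ^ n)
      = 2 * Real.pi * Complex.I * k / (d : ℂ) ^ n + 2 * Real.pi * Complex.I := by
    have : ((d : ℂ) ^ n) ≠ 0 := pow_ne_zero _ hd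
    push_cast
    field_simp
  rw [h, Complex.exp_add, Complex.exp_two_pi_mul_I, mul_one]

lemma st13S_sub (d : ℕ) (δ : ℂ) (Q : Polynomial ℂ) (n t : ℕ) (ε ζ : ℂ)
    (hε : ε ^ d ^ n = 1) :
    st13S d δ Q (n + t) ζ - st13S d δ Q (n + t) (ε * ζ)
      = st13S d δ Q n ζ - st13S d δ Q n (ε * ζ) := by
  induction t with
  | zero => rfl
  | succ t ih =>
    have hεt : ε ^ d ^ (n + t) = 1 := by
      rw [pow_add, pow_mul, hε, one_pow]
    have hkey : (ε * ζ) ^ d ^ (n + t) = ζ ^ d ^ (n + t) := by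
      rw [mul_pow, hεt, one_mul]
    have h1 : st13S d δ Q (n + (t + 1)) ζ
        = st13S d δ Q (n + t) ζ + ((d : ℂ) / δ) ^ (n + t) * Q.eval (ζ ^ d ^ (n + t)) := by
      rw [st13S, st13S, show n + (t + 1) = (n + t) + 1 by ring, Finset.sum_range_succ]
    have h2 : st13S d δ Q (n + (t + 1)) (ε * ζ)
        = st13S d δ Q (n + t) (ε * ζ)
          + ((d : ℂ) / δ) ^ (n + t) * Q.eval (ζ ^ d ^ (n + t)) := by
      rw [st13S, st13S, show n + (t + 1) = (n + t) + 1 by ring, Finset.sum_range_succ, hkey]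
    rw [h1, h2]
    rw [add_sub_add_right_eq_sub]
    exact ih

/-- The deck transformations γ_{k/d^n} are biholomorphic self-maps of
    ℂ × (ℂ∖D̄), depend only on the class [k/d^n] ∈ Z[1/d]/ℤ, and compose
    according to addition of labels. -/
theorem stmt13 (d : ℕ) (hd : 2 ≤ d) (δ : ℂ) (hδ : δ ≠ 0) (Q : Polynomial ℂ)
    (hQ : Q.degree = (d + 1 : ℕ))
    (gam : ℕ → ℕ → ℂ × ℂ → ℂ × ℂ)
    (hgam : ∀ (k n : ℕ) (p : ℂ × ℂ), gam k n p =
      (p.1 + ((d : ℂ) / δ) * ∑ l ∈ Finset.range n, ((d : ℂ) / δ) ^ l *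
          (Q.eval (p.2 ^ d ^ l) -
            Q.eval ((Complex.exp (2 * Real.pi * Complex.I * k / (d : ℂ) ^ n) * p.2) ^ d ^ l)),
        Complex.exp (2 * Real.pi * Complex.I * k / (d : ℂ) ^ n) * p.2)) :
    (∀ k n : ℕ, Set.BijOn (gam k n)
        {p : ℂ × ℂ | 1 < ‖p.2‖} {p : ℂ × ℂ | 1 < ‖p.2‖}) ∧
    (∀ k n : ℕ, DifferentiableOn ℂ (gam k n) {p : ℂ × ℂ | 1 < ‖p.2‖}) ∧
    (∀ k n : ℕ, gam (k + d ^ n) n = gam k n) ∧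
    (∀ k n k' n' : ℕ, ∀ p : ℂ × ℂ, 1 < ‖p.2‖ →
      gam k n (gam k' n' p) = gam (k * d ^ n' + k' * d ^ n) (n + n') p) := by
  have hd0 : (d : ℂ) ≠ 0 := Nat.cast_ne_zero.mpr (by omega)
  -- rewrite gam in terms of st13E and st13S
  have hgam' : ∀ (k n : ℕ) (p : ℂ × ℂ), gam k n p =
      (p.1 + ((d : ℂ) / δ) * (st13S d δ Q n p.2 - st13S d δ Q n (st13E d k n * p.2)),
        st13E d k n * p.2) := by
    intro k n p
    rw [hgam]
    have : ∑ l ∈ Finset.range n, ((d : ℂ) / δ) ^ l *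
        (Q.eval (p.2 ^ d ^ l) - Q.eval ((st13E d k n * p.2) ^ d ^ l))
        = st13S d δ Q n p.2 - st13S d δ Q n (st13E d k n * p.2) := by
      rw [st13S, st13S, ← Finset.sum_sub_distrib]
      exact Finset.sum_congr rfl fun l _ => mul_sub _ _ _
    rw [← this]; rfl
  -- composition law (holds everywhere)
  have comp : ∀ (k n k' n' : ℕ) (p : ℂ × ℂ),
      gam k n (gam k' n' p) = gam (k * d ^ n' + k' * d ^ n) (n + n') p := by
    intro k n k' n' p
    rw [hgam', hgam', hgam']
    have hE : st13E d k n * st13E d k' n' = st13E d (k * d ^ n' + k' * d ^ n) (n + n') :=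
      st13E_mul d k n k' n' hd0
    have hpow : st13E d k' n' ^ d ^ n' = 1 := st13E_pow d k' n' hd0
    have hpow2 : st13E d k n ^ d ^ n = 1 := st13E_pow d k n hd0
    have h1 : st13S d δ Q n' p.2 - st13S d δ Q n' (st13E d k' n' * p.2)
        = st13S d δ Q (n + n') p.2 - st13S d δ Q (n + n') (st13E d k' n' * p.2) := by
      rw [show n + n' = n' + n by ring, st13S_sub d δ Q n' n _ _ hpow]
    have h2 : st13S d δ Q n (st13E d k' n' * p.2)
          - st13S d δ Q n (st13E d k n * (st13E d k' n' * p.2))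
        = st13S d δ Q (n + n') (st13E d k' n' * p.2)
          - st13S d δ Q (n + n') (st13E d k n * (st13E d k' n' * p.2)) :=
      (st13S_sub d δ Q n n' _ _ hpow2).symm
    simp only [Prod.mk.injEq]
    constructor
    · rw [h2]
      have hEz : st13E d k n * (st13E d k' n' * p.2)
          = st13E d (k * d ^ n' + k' * d ^ n) (n + n') * p.2 := by
        rw [← mul_assoc, hE]
      rw [hEz]
      rw [h1]
      ring
    · rw [← mul_assoc, hE]
  -- identity law: divisible labels give the identity
  have hid : ∀ (k n : ℕ) (p : ℂ × ℂ), gam (k * d ^ n) n p = p := by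
    intro k n p
    rw [hgam', st13E_one d k n hd0, one_mul, sub_self, mul_zero, add_zero]
  refine ⟨?_, ?_, ?_, ?_⟩
  · intro k n
    have hmaps : ∀ k n : ℕ, Set.MapsTo (gam k n) {p : ℂ × ℂ | 1 < ‖p.2‖}
        {p : ℂ × ℂ | 1 < ‖p.2‖} := by
      intro k n p hp
      simp only [Set.mem_setOf_eq] at hp ⊢
      rw [hgam']
      simp only [norm_mul, st13E_abs, one_mul]
      exact hp
    -- inverse label
    set m : ℕ := k * (d ^ n - 1) with hm
    have hmk : m + k = k * d ^ n := by
      obtain ⟨t, ht⟩ := Nat.exists_eq_add_of_le (Nat.one_le_pow n d (by omega))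
      rw [hm, ht, Nat.add_sub_cancel_left]
      ring
    have hinv1 : ∀ p, gam m n (gam k n p) = p := by
      intro p
      rw [comp]
      have key : m * d ^ n + k * d ^ n = k * d ^ (n + n) := by
        rw [← add_mul, hmk, pow_add]; ring
      rw [key]
      exact hid _ _ p
    have hinv2 : ∀ p, gam k n (gam m n p) = p := by
      intro p
      rw [comp]
      have key : k * d ^ n + m * d ^ n = k * d ^ (n + n) := by
        rw [← add_mul, add_comm k m, hmk, pow_add]; ring
      rw [key]
      exact hid _ _ p
    refine ⟨hmaps k n, ?_, ?_⟩
    · intro p _ q _ h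
      have := congrArg (gam m n) h
      rwa [hinv1, hinv1] at this
    · intro q hq
      exact ⟨gam m n q, hmaps m n hq, hinv2 q⟩
  · intro k n
    have : gam k n = fun p : ℂ × ℂ =>
        (p.1 + ((d : ℂ) / δ) * (st13S d δ Q n p.2 - st13S d δ Q n (st13E d k n * p.2)),
          st13E d k n * p.2) := funext (hgam' k n)
    rw [this]
    apply DifferentiableOn.prodMk
    · apply DifferentiableOn.add differentiable_fst.differentiableOn
      apply DifferentiableOn.const_mul
      apply DifferentiableOn.sub
      · apply Differentiable.differentiableOn
        apply Differentiable.fun_sum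
        intro l _
        exact (Q.differentiable.comp (differentiable_snd.pow _)).const_mul _
      · apply Differentiable.differentiableOn
        apply Differentiable.fun_sum
        intro l _
        exact (Q.differentiable.comp
          (((differentiable_const _).mul differentiable_snd).pow _)).const_mul _
    · exact ((differentiable_const _).mul differentiable_snd).differentiableOn
  · intro k n
    funext p
    rw [hgam', hgam', st13E_period d k n hd0]
  · intro k n k' n' p _
    exact comp k n k' n' p
end

section
/- Let d ≥ 2 and let H̃(z,ζ) = ((δ/d)z + Q(ζ), ζ^d). For every class [k/d^n] ∈ Z[1/d]/ℤ, H̃ ∘ γ_{k/d^n} = γ_{k/d^{n-1}} ∘ H̃ (for n ≥ 1), where γ are the deck transformations of the previous statement; i.e., conjugation by H̃ acts on the deck group Z[1/d]/ℤ as multiplication by d. -/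
/-- Conjugation by H̃ acts on the deck group as multiplication by d:
    H̃ ∘ γ_{k/d^n} = γ_{k/d^{n-1}} ∘ H̃ for n ≥ 1. -/
theorem stmt14 (d : ℕ) (hd : 2 ≤ d) (δ : ℂ) (hδ : δ ≠ 0) (Q : Polynomial ℂ)
    (hQ : Q.degree = (d + 1 : ℕ))
    (Htil : ℂ × ℂ → ℂ × ℂ)
    (hH : ∀ p : ℂ × ℂ, Htil p = ((δ / d) * p.1 + Q.eval p.2, p.2 ^ d))
    (gam : ℕ → ℕ → ℂ × ℂ → ℂ × ℂ)
    (hgam : ∀ (k n : ℕ) (p : ℂ × ℂ), gam k n p =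
      (p.1 + ((d : ℂ) / δ) * ∑ l ∈ Finset.range n, ((d : ℂ) / δ) ^ l *
          (Q.eval (p.2 ^ d ^ l) -
            Q.eval ((Complex.exp (2 * Real.pi * Complex.I * k / (d : ℂ) ^ n) * p.2) ^ d ^ l)),
        Complex.exp (2 * Real.pi * Complex.I * k / (d : ℂ) ^ n) * p.2)) :
    ∀ k n : ℕ, 1 ≤ n → ∀ p : ℂ × ℂ, 1 < ‖p.2‖ →
      Htil (gam k n p) = gam k (n - 1) (Htil p) := by
  intro k n hn p hp
  obtain ⟨m, rfl⟩ : ∃ m, n = m + 1 := ⟨n - 1, (Nat.succ_pred_eq_of_pos hn).symm⟩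
  have hd0 : (d : ℂ) ≠ 0 := Nat.cast_ne_zero.mpr (by omega)
  simp only [Nat.add_sub_cancel]
  set z := p.1
  set ζ := p.2
  set ω : ℂ := Complex.exp (2 * Real.pi * Complex.I * k / (d : ℂ) ^ (m + 1)) with hωdef
  set ω' : ℂ := Complex.exp (2 * Real.pi * Complex.I * k / (d : ℂ) ^ m) with hω'def
  have hω : ω ^ d = ω' := by
    rw [hωdef, hω'def, ← Complex.exp_nat_mul]
    congr 1
    have h1 : ((d : ℂ)) ^ (m + 1) = d * d ^ m := by ring
    rw [h1]
    field_simp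
  rw [hgam, hH, hgam, hH]
  simp only
  rw [Prod.mk.injEq]
  have key : ∑ l ∈ Finset.range (m + 1), ((d : ℂ) / δ) ^ l *
        (Q.eval (ζ ^ d ^ l) - Q.eval ((ω * ζ) ^ d ^ l))
      = (Q.eval ζ - Q.eval (ω * ζ)) + ((d : ℂ) / δ) *
        ∑ l ∈ Finset.range m, ((d : ℂ) / δ) ^ l *
          (Q.eval ((ζ ^ d) ^ d ^ l) - Q.eval ((ω' * ζ ^ d) ^ d ^ l)) := by
    rw [Finset.sum_range_succ']
    simp only [pow_zero, pow_one, one_mul]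
    rw [add_comm]
    congr 1
    rw [Finset.mul_sum]
    refine Finset.sum_congr rfl fun l _ => ?_
    rw [← hω, ← mul_pow, ← pow_mul, ← pow_mul]
    have h2 : d ^ (l + 1) = d * d ^ l := by ring
    rw [h2]
    ring
  constructor
  · rw [key]
    field_simp
    ring
  · rw [mul_pow, hω]
end

section
/- Let d ≥ 2, α ∈ ℂ with α ≠ 0, and let p_H, p_F be monic centered degree-d complex polynomials. If the expansions of α·y·(p_H(y)/y^d)^{1/d} and α y·(p_F(αy)/(αy)^d)^{1/d} at infinity agree up to terms of order O(1/y^{d-1}), then a_{d-k}^F = α^k a_{d-k}^H for all 2 ≤ k ≤ d−1. -/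
lemma coeff_pow_congr (f g : PowerSeries ℂ) (k : ℕ)
    (h : ∀ j ≤ k, PowerSeries.coeff j f = PowerSeries.coeff j g) :
    ∀ n : ℕ, ∀ m ≤ k, PowerSeries.coeff m (f ^ n) = PowerSeries.coeff m (g ^ n) := by
  intro n
  induction n with
  | zero => simp
  | succ n ih =>
      intro m hm
      rw [pow_succ, pow_succ, PowerSeries.coeff_mul, PowerSeries.coeff_mul]
      refine Finset.sum_congr rfl ?_
      intro p hp
      rw [Finset.HasAntidiagonal.mem_antidiagonal] at hp
      rw [ih p.1 (by omega), h p.2 (by omega)]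

/-- If the expansions at infinity of α·y·(p_H(y)/y^d)^{1/d} and
    αy·(p_F(αy)/(αy)^d)^{1/d} agree up to O(1/y^{d-1}), then
    a_{d-k}^F = α^k a_{d-k}^H for 2 ≤ k ≤ d−1.  Encoded via the power series
    g_H, g_F (in u = 1/y) with g(0)=1 and g^d = u^d p(1/u); the agreement of the
    expansions up to O(1/y^{d-1}) translates into
    coeff_j g_H = α^{-j}·coeff_j g_F for j ≤ d−1. -/
theorem stmt18 (d : ℕ) (hd : 2 ≤ d) (α : ℂ) (hα : α ≠ 0)
    (aH aF : ℕ → ℂ) (gH gF : PowerSeries ℂ)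
    (hgH0 : PowerSeries.coeff 0 gH = 1) (hgF0 : PowerSeries.coeff 0 gF = 1)
    (hgH : gH ^ d = PowerSeries.mk (fun j => if j = 0 then (1 : ℂ) else
      if 2 ≤ j ∧ j ≤ d then aH (d - j) else 0))
    (hgF : gF ^ d = PowerSeries.mk (fun j => if j = 0 then (1 : ℂ) else
      if 2 ≤ j ∧ j ≤ d then aF (d - j) else 0))
    (hagree : ∀ j : ℕ, j ≤ d - 1 →
      PowerSeries.coeff j gH = α ^ (-(j : ℤ)) * PowerSeries.coeff j gF) :
    ∀ k : ℕ, 2 ≤ k → k ≤ d - 1 → aF (d - k) = α ^ k * aH (d - k) := by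
  intro k hk2 hkd
  have hagree' : ∀ j ≤ d - 1,
      PowerSeries.coeff j gH = PowerSeries.coeff j (PowerSeries.rescale α⁻¹ gF) := by
    intro j hj
    rw [PowerSeries.coeff_rescale, hagree j hj, zpow_neg, zpow_natCast, inv_pow]
  have key := coeff_pow_congr gH (PowerSeries.rescale α⁻¹ gF) (d - 1) hagree' d k hkd
  rw [← map_pow, PowerSeries.coeff_rescale, hgH, hgF] at key
  simp only [PowerSeries.coeff_mk] at key
  have hk0 : k ≠ 0 := by omega
  have hkd' : 2 ≤ k ∧ k ≤ d := ⟨hk2, by omega⟩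
  rw [if_neg hk0, if_pos hkd', if_neg hk0, if_pos hkd'] at key
  field_simp at key ⊢
  rw [key, mul_right_comm, ← mul_pow, one_div, inv_mul_cancel₀ hα, one_pow, one_mul]
end
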